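/- Suppose the proximal error-bound assumption (prox-EB) holds with parameters μ, δ, σ₀ > 0. There is a universal constant C > 0 (independent of all problem data) such that for every x ∈ X and every σ ∈ (0, min(σ₀, δ/(2 C_f))], one has 0 ≤ ψ(x) − ψ_σ(x) ≤ C · (l_{f,0}²/μ) · σ; in particular the penalized hyper-objective never exceeds the hyper-objective: ψ_σ(x) ≤ ψ(x). -/

import Mathlib

open Set Metric

set_option maxHeartbeats 2000000

/-- Under prox-EB with parameters `μ, δ, σ₀ > 0`, there is a universal
constant `C > 0` (independent of all problem data) such that for every `x ∈ X` and every
`σ ∈ (0, min(σ₀, δ/(2 C_f))]`, one has `0 ≤ ψ(x) − ψ_σ(x) ≤ C (l_{f,0}²/μ) σ`; in particular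
`ψ_σ(x) ≤ ψ(x)`. -/
theorem stmt1 :
    ∃ C : ℝ, 0 < C ∧
    ∀ (dx dy : ℕ)
      (X : Set (EuclideanSpace ℝ (Fin dx)))
      (Y : Set (EuclideanSpace ℝ (Fin dy)))
      (f g : EuclideanSpace ℝ (Fin dx) → EuclideanSpace ℝ (Fin dy) → ℝ)
      (lf0 lf1 lg1 Cf μ δ σ₀ ρ : ℝ)
      (prox : EuclideanSpace ℝ (Fin dx) → ℝ → EuclideanSpace ℝ (Fin dy) →
        EuclideanSpace ℝ (Fin dy))
      (T : EuclideanSpace ℝ (Fin dx) → ℝ → Set (EuclideanSpace ℝ (Fin dy)))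
      (l : EuclideanSpace ℝ (Fin dx) → ℝ → ℝ)
      (ψ : EuclideanSpace ℝ (Fin dx) → ℝ)
      (hXne : X.Nonempty) (hXclosed : IsClosed X) (hXconv : Convex ℝ X)
      (hYne : Y.Nonempty) (hYclosed : IsClosed Y) (hYconv : Convex ℝ Y)
      (hYbdd : Bornology.IsBounded Y)
      (hfC2 : ContDiff ℝ 2 (Function.uncurry f))
      (hgC2 : ContDiff ℝ 2 (Function.uncurry g))
      (hLipf : ∀ p q : EuclideanSpace ℝ (Fin dx) × EuclideanSpace ℝ (Fin dy),
        ‖fderiv ℝ (Function.uncurry f) p - fderiv ℝ (Function.uncurry f) q‖ ≤ lf1 * ‖p - q‖)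
      (hLipg : ∀ p q : EuclideanSpace ℝ (Fin dx) × EuclideanSpace ℝ (Fin dy),
        ‖fderiv ℝ (Function.uncurry g) p - fderiv ℝ (Function.uncurry g) q‖ ≤ lg1 * ‖p - q‖)
      (hlf0 : ∀ x ∈ X, ∀ y ∈ Y, ‖gradient (fun y' => f x y') y‖ ≤ lf0)
      -- `C_f` is the supremum of `|f|` over `X × Y`
      (hCf : IsLUB ((fun p : EuclideanSpace ℝ (Fin dx) × EuclideanSpace ℝ (Fin dy) =>
        |f p.1 p.2|) '' (X ×ˢ Y)) Cf)
      (hμ : 0 < μ) (hδ : 0 < δ) (hσ₀ : 0 < σ₀)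
      (hρpos : 0 < ρ) (hρ : ρ ≤ 1 / (8 * lg1)) (hσ₀l : σ₀ * lf1 ≤ lg1)
      -- `prox x σ y` is the unique minimizer over `z ∈ Y` of `ρ h_σ(x,z) + ‖z − y‖²/2`
      (hprox : ∀ x (σ : ℝ), σ ∈ Icc 0 σ₀ → ∀ y, prox x σ y ∈ Y ∧ ∀ z ∈ Y,
        ρ * (σ * f x (prox x σ y) + g x (prox x σ y)) + ‖prox x σ y - y‖ ^ 2 / 2
          ≤ ρ * (σ * f x z + g x z) + ‖z - y‖ ^ 2 / 2)
      -- the lower-level solution set `T(x,σ)`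
      (hT : ∀ x σ, T x σ = {y ∈ Y | ∀ z ∈ Y, σ * f x y + g x y ≤ σ * f x z + g x z})
      -- prox-EB
      (hEB : ∀ x ∈ X, ∀ σ ∈ Icc (0:ℝ) σ₀, ∀ y ∈ Y,
        ρ⁻¹ * ‖y - prox x σ y‖ ≤ δ →
          μ * infDist y (T x σ) ≤ ρ⁻¹ * ‖y - prox x σ y‖)
      -- value function and hyper-objective
      (hl : ∀ x σ, l x σ = sInf ((fun y => σ * f x y + g x y) '' Y))
      (hψ : ∀ x, ψ x = sInf ((fun y => f x y) '' T x 0)),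
      ∀ x ∈ X, ∀ σ : ℝ, 0 < σ → σ ≤ min σ₀ (δ / (2 * Cf)) →
        (l x σ - l x 0) / σ ≤ ψ x ∧
        ψ x - (l x σ - l x 0) / σ ≤ C * (lf0 ^ 2 / μ) * σ := by
  refine ⟨2, by norm_num, ?_⟩
  intro dx dy X Y f g lf0 lf1 lg1 Cf μ δ σ₀ ρ prox T l ψ hXne hXclosed hXconv hYne hYclosed
    hYconv hYbdd hfC2 hgC2 hLipf hLipg hlf0 hCf hμ hδ hσ₀ hρpos hρ hσ₀l hprox hT hEB hl hψ
    x hx σ hσpos hσle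
  have hσσ₀ : σ ≤ σ₀ := le_trans hσle (min_le_left _ _)
  have hYcpt : IsCompact Y := Metric.isCompact_of_isClosed_isBounded hYclosed hYbdd
  have hfc : Continuous (Function.uncurry f) := hfC2.continuous
  have hgc : Continuous (Function.uncurry g) := hgC2.continuous
  have hfxc : Continuous (fun y => f x y) := hfc.comp (Continuous.prodMk_right x)
  have hgxc : Continuous (fun y => g x y) := hgc.comp (Continuous.prodMk_right x)
  have hcont : ∀ τ : ℝ, Continuous (fun y => τ * f x y + g x y) := fun τ =>
    (continuous_const.mul hfxc).add hgxc
  -- membership in T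
  have hTmem : ∀ τ : ℝ, ∀ w, w ∈ T x τ →
      w ∈ Y ∧ ∀ z ∈ Y, τ * f x w + g x w ≤ τ * f x z + g x z := by
    intro τ w hw; rw [hT] at hw; exact hw
  -- T is nonempty
  have hTne : ∀ τ : ℝ, (T x τ).Nonempty := by
    intro τ
    obtain ⟨w, hwY, hwmin⟩ := hYcpt.exists_isMinOn hYne (hcont τ).continuousOn
    exact ⟨w, by rw [hT]; exact ⟨hwY, fun z hz => isMinOn_iff.mp hwmin z hz⟩⟩
  -- the value of l at minimizers
  have hval : ∀ τ : ℝ, ∀ w, w ∈ T x τ → l x τ = τ * f x w + g x w := by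
    intro τ w hw
    obtain ⟨hwY, hwmin⟩ := hTmem τ w hw
    rw [hl]
    exact (IsLeast.csInf_eq ⟨⟨w, hwY, rfl⟩, by rintro b ⟨z, hzY, rfl⟩; exact hwmin z hzY⟩)
  have hlle : ∀ τ : ℝ, ∀ z ∈ Y, l x τ ≤ τ * f x z + g x z := by
    intro τ z hz
    obtain ⟨w, hw⟩ := hTne τ
    rw [hval τ w hw]
    exact (hTmem τ w hw).2 z hz
  -- T is compact
  have hTcpt : ∀ τ : ℝ, IsCompact (T x τ) := by
    intro τ
    have hcl : IsClosed (T x τ) := by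
      rw [hT]
      have heq : {y ∈ Y | ∀ z ∈ Y, τ * f x y + g x y ≤ τ * f x z + g x z}
          = Y ∩ ⋂ z ∈ Y, {y | τ * f x y + g x y ≤ τ * f x z + g x z} := by
        ext y; simp [Set.mem_iInter]
      rw [heq]
      exact hYclosed.inter (isClosed_biInter fun z _ =>
        isClosed_le (hcont τ) continuous_const)
    exact hYcpt.of_isClosed_subset hcl (by rw [hT]; exact fun y hy => hy.1)
  -- differentiability of f x ·
  have hfd : Differentiable ℝ (Function.uncurry f) := hfC2.differentiable (by norm_num)
  have hdfa : ∀ y, DifferentiableAt ℝ (fun y' => f x y') y := by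
    intro y
    exact (hfd (x, y)).comp y (DifferentiableAt.prodMk (differentiableAt_const x) differentiableAt_id)
  -- Lipschitz bound for f x · on Y
  have hlip : ∀ a ∈ Y, ∀ b ∈ Y, |f x a - f x b| ≤ lf0 * ‖a - b‖ := by
    intro a ha b hb
    have hbound : ∀ y ∈ Y, ‖fderiv ℝ (fun y' => f x y') y‖ ≤ lf0 := by
      intro y hy
      have h := hlf0 x hx y hy
      simp only [gradient] at h
      rwa [LinearIsometryEquiv.norm_map] at h
    have := hYconv.norm_image_sub_le_of_norm_fderiv_le (fun y hy => hdfa y) hbound hb ha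
    simpa [Real.norm_eq_abs] using this
  have hlf0nn : 0 ≤ lf0 := by
    obtain ⟨y0, hy0⟩ := hYne
    exact le_trans (norm_nonneg _) (hlf0 x hx y0 hy0)
  -- a minimizer at level σ
  obtain ⟨yσ, hyσT⟩ := hTne σ
  have hyσY : yσ ∈ Y := (hTmem σ yσ hyσT).1
  -- |f| ≤ Cf on X × Y
  have habs : ∀ y ∈ Y, |f x y| ≤ Cf := fun y hy => hCf.1 ⟨(x, y), ⟨hx, hy⟩, rfl⟩
  rw [hψ x]
  have hbdd : BddBelow ((fun y => f x y) '' T x 0) := by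
    refine ⟨-Cf, ?_⟩
    rintro b ⟨w, hw, rfl⟩
    have := habs w ((hTmem 0 w hw).1)
    linarith [abs_le.mp this |>.1]
  constructor
  · -- first inequality
    refine le_csInf ((hTne 0).image _) ?_
    rintro b ⟨w, hw, rfl⟩
    have hwY := (hTmem 0 w hw).1
    have h1 : l x σ ≤ σ * f x w + g x w := hlle σ w hwY
    have h2 : l x 0 = g x w := by
      have := hval 0 w hw; linarith [this]
    rw [div_le_iff₀ hσpos]
    linarith
  · -- second inequality
    -- residual bound
    have hres : ∀ τ τ' : ℝ, 0 ≤ τ' → τ' ≤ τ → τ ≤ σ₀ → ∀ z, z ∈ T x τ →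
        ρ⁻¹ * ‖z - prox x τ' z‖ ≤ 2 * (τ - τ') * lf0 := by
      intro τ τ' h0 hle hτσ z hz
      obtain ⟨hzY, hzmin⟩ := hTmem τ z hz
      obtain ⟨hpY, hpmin⟩ := hprox x τ' ⟨h0, le_trans hle hτσ⟩ z
      set p := prox x τ' z with hp
      have h1 : ρ * (τ' * f x p + g x p) + ‖p - z‖ ^ 2 / 2 ≤ ρ * (τ' * f x z + g x z) := by
        have := hpmin z hzY
        simpa using this
      have h2 : τ * f x z + g x z ≤ τ * f x p + g x p := hzmin p hpY
      have h3 : |f x z - f x p| ≤ lf0 * ‖z - p‖ := hlip z hzY p hpY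
      have ha : ‖z - p‖ = ‖p - z‖ := norm_sub_rev _ _
      rw [ha] at h3
      obtain ⟨h3a, h3b⟩ := abs_le.mp h3
      have hc : 0 ≤ ρ * ((τ - τ') * lf0) :=
        mul_nonneg hρpos.le (mul_nonneg (by linarith) hlf0nn)
      have h2' : ρ * (τ * f x z + g x z) ≤ ρ * (τ * f x p + g x p) :=
        mul_le_mul_of_nonneg_left h2 hρpos.le
      have hprod : (0:ℝ) ≤ ρ * (τ - τ') * (lf0 * ‖p - z‖ + (f x z - f x p)) :=
        mul_nonneg (mul_nonneg hρpos.le (sub_nonneg.mpr hle)) (by linarith)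
      have key1 : ‖p - z‖ ^ 2 / 2 ≤ ρ * ((τ - τ') * lf0) * ‖p - z‖ := by
        nlinarith [h1, h2', hprod]
      have key2 : ‖p - z‖ ≤ 2 * (ρ * ((τ - τ') * lf0)) := by
        nlinarith [key1, norm_nonneg (p - z), hc, mul_nonneg hc (norm_nonneg (p - z))]
      have : ρ⁻¹ * ‖z - p‖ ≤ ρ⁻¹ * (2 * (ρ * ((τ - τ') * lf0))) := by
        rw [ha]
        exact mul_le_mul_of_nonneg_left key2 (inv_nonneg.mpr hρpos.le)
      calc ρ⁻¹ * ‖z - p‖ ≤ ρ⁻¹ * (2 * (ρ * ((τ - τ') * lf0))) := this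
        _ = 2 * (τ - τ') * lf0 := by field_simp
    -- choose the number of steps
    obtain ⟨n, hn1, hn2⟩ : ∃ n : ℕ, 1 ≤ n ∧ 2 * (σ / n) * lf0 ≤ δ := by
      refine ⟨⌈2 * σ * lf0 / δ⌉₊ + 1, by omega, ?_⟩
      have hmpos : (0 : ℝ) < ((⌈2 * σ * lf0 / δ⌉₊ + 1 : ℕ) : ℝ) := by
        exact_mod_cast Nat.succ_pos _
      have h1 : 2 * σ * lf0 / δ ≤ ((⌈2 * σ * lf0 / δ⌉₊ + 1 : ℕ) : ℝ) := by
        push_cast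
        linarith [Nat.le_ceil (2 * σ * lf0 / δ)]
      have h2 : 2 * σ * lf0 ≤ ((⌈2 * σ * lf0 / δ⌉₊ + 1 : ℕ) : ℝ) * δ := by
        rw [div_le_iff₀ hδ] at h1; linarith
      rw [show 2 * (σ / ((⌈2 * σ * lf0 / δ⌉₊ + 1 : ℕ) : ℝ)) * lf0
          = 2 * σ * lf0 / ((⌈2 * σ * lf0 / δ⌉₊ + 1 : ℕ) : ℝ) by ring,
        div_le_iff₀ hmpos]
      linarith
    have hnpos : (0 : ℝ) < n := by exact_mod_cast Nat.pos_of_ne_zero (by omega)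
    set Δ : ℝ := σ / n with hΔ
    have hΔpos : 0 < Δ := div_pos hσpos hnpos
    have hnΔ : (n : ℝ) * Δ = σ := by rw [hΔ]; field_simp
    -- the chain
    have chain : ∀ k : ℕ, k ≤ n →
        ∃ z, z ∈ T x (σ - k * Δ) ∧ f x z ≤ f x yσ + k * (2 * Δ * lf0 ^ 2 / μ) := by
      intro k
      induction k with
      | zero => intro _; exact ⟨yσ, by simpa using hyσT, by simp⟩
      | succ k ih =>
        intro hk1
        obtain ⟨z, hzT, hzf⟩ := ih (by omega)
        have hzY := (hTmem _ z hzT).1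
        set τ : ℝ := σ - k * Δ with hτ
        set τ' : ℝ := σ - (k + 1 : ℕ) * Δ with hτ'
        have hkn : ((k : ℝ) + 1) ≤ n := by exact_mod_cast hk1
        have hτ'0 : 0 ≤ τ' := by
          have : ((k : ℝ) + 1) * Δ ≤ n * Δ := mul_le_mul_of_nonneg_right hkn hΔpos.le
          rw [hnΔ] at this
          simp only [hτ']
          push_cast
          linarith
        have hττ' : τ' ≤ τ := by
          simp only [hτ, hτ']; push_cast; nlinarith [hΔpos.le]
        have hτσ₀ : τ ≤ σ₀ := by
          have : 0 ≤ (k : ℝ) * Δ := mul_nonneg (Nat.cast_nonneg k) hΔpos.le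
          simp only [hτ]; linarith
        have hdiffττ' : τ - τ' = Δ := by simp only [hτ, hτ']; push_cast; ring
        have hres2 : ρ⁻¹ * ‖z - prox x τ' z‖ ≤ 2 * Δ * lf0 := by
          have := hres τ τ' hτ'0 hττ' hτσ₀ z hzT
          rwa [hdiffττ'] at this
        have hδ2 : 2 * Δ * lf0 ≤ δ := by rw [hΔ]; exact hn2
        have hEB2 := hEB x hx τ' ⟨hτ'0, le_trans hττ' hτσ₀⟩ z hzY (le_trans hres2 hδ2)
        have hdist : infDist z (T x τ') ≤ 2 * Δ * lf0 / μ := by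
          rw [le_div_iff₀ hμ]
          calc infDist z (T x τ') * μ = μ * infDist z (T x τ') := by ring
            _ ≤ ρ⁻¹ * ‖z - prox x τ' z‖ := hEB2
            _ ≤ 2 * Δ * lf0 := hres2
        obtain ⟨z', hz'T, hz'd⟩ := (hTcpt τ').exists_infDist_eq_dist (hTne τ') z
        have hz'Y := (hTmem _ z' hz'T).1
        have hnorm : ‖z' - z‖ ≤ 2 * Δ * lf0 / μ := by
          rw [← dist_eq_norm, dist_comm]
          rw [← hz'd]
          exact hdist
        have hfz' : f x z' ≤ f x z + lf0 * (2 * Δ * lf0 / μ) := by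
          have h3 := hlip z' hz'Y z hzY
          have := (abs_le.mp h3).2
          have h4 : lf0 * ‖z' - z‖ ≤ lf0 * (2 * Δ * lf0 / μ) :=
            mul_le_mul_of_nonneg_left hnorm hlf0nn
          linarith
        refine ⟨z', hz'T, ?_⟩
        have hfin : lf0 * (2 * Δ * lf0 / μ) = 2 * Δ * lf0 ^ 2 / μ := by ring
        push_cast
        push_cast at hzf
        linarith [hfz', hzf, hfin]
    obtain ⟨z0, hz0T, hz0f⟩ := chain n le_rfl
    have h0 : σ - (n : ℝ) * Δ = 0 := by rw [hnΔ]; ring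
    rw [h0] at hz0T
    have hψle : sInf ((fun y => f x y) '' T x 0) ≤ f x z0 :=
      csInf_le hbdd ⟨z0, hz0T, rfl⟩
    -- ψ_σ ≥ f x yσ
    have hψσ : f x yσ ≤ (l x σ - l x 0) / σ := by
      have h1 : l x σ = σ * f x yσ + g x yσ := hval σ yσ hyσT
      have h2 : l x 0 ≤ 0 * f x yσ + g x yσ := hlle 0 yσ hyσY
      rw [le_div_iff₀ hσpos]
      linarith
    have htot : (n : ℝ) * (2 * Δ * lf0 ^ 2 / μ) = 2 * (lf0 ^ 2 / μ) * σ := by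
      calc (n : ℝ) * (2 * Δ * lf0 ^ 2 / μ) = 2 * (lf0 ^ 2 / μ) * ((n : ℝ) * Δ) := by ring
        _ = 2 * (lf0 ^ 2 / μ) * σ := by rw [hnΔ]
    linarith [hz0f, htot.le, htot.ge]
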